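/- Let R be a commutative ring and T(R) its canonically associated von Neumann regular ring. The canonical ring homomorphism ι: R → T(R) induces a continuous bijection ι^a: Spec(T(R)) → Spec(R) (with Zariski topologies), given by contraction Q ↦ ι⁻¹(Q). -/

import Mathlib

open MvPolynomial in
/-- The ideal of relations `a² X_a - a`, `a X_a² - X_a` (one indeterminate per element). -/
noncomputable def TRel (R : Type*) [CommRing R] : Ideal (MvPolynomial R R) :=
  Ideal.span {p : MvPolynomial R R | ∃ a : R,
    p = C a ^ 2 * X a - C a ∨ p = C a * X a ^ 2 - X a}

/-- The von Neumann regular ring `T(R)` canonically associated with `R`. -/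
abbrev TRing (R : Type*) [CommRing R] := MvPolynomial R R ⧸ TRel R

/-- The canonical ring homomorphism `ι : R → T(R)`. -/
noncomputable def iotaT (R : Type*) [CommRing R] : R →+* TRing R :=
  (Ideal.Quotient.mk (TRel R)).comp MvPolynomial.C

namespace TProofAux

open MvPolynomial

variable {R : Type*} [CommRing R] (p : Ideal R) [p.IsPrime]

/-- The map `R → Frac(R/p)`. -/
noncomputable def g : R →+* FractionRing (R ⧸ p) :=
  (algebraMap (R ⧸ p) (FractionRing (R ⧸ p))).comp (Ideal.Quotient.mk p)

lemma g_eq_zero_iff (a : R) : g p a = 0 ↔ a ∈ p := by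
  rw [g, RingHom.comp_apply, IsFractionRing.to_map_eq_zero_iff,
    Ideal.Quotient.eq_zero_iff_mem]

/-- The map `T(R) → Frac(R/p)` sending `X_a` to the inverse of (the image of) `a`. -/
noncomputable def φ : TRing R →+* FractionRing (R ⧸ p) :=
  Ideal.Quotient.lift (TRel R) (eval₂Hom (g p) (fun a => (g p a)⁻¹)) (by
    have hle : TRel R ≤ RingHom.ker (eval₂Hom (g p) (fun a => (g p a)⁻¹)) := by
      rw [TRel]
      refine Ideal.span_le.mpr ?_
      rintro q ⟨a, rfl | rfl⟩ <;>
        · simp only [SetLike.mem_coe, RingHom.mem_ker, map_sub, map_mul, map_pow,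
            eval₂Hom_C, eval₂Hom_X']
          by_cases h : g p a = 0
          · simp [h]
          · field_simp
            ring
    exact fun x hx => RingHom.mem_ker.mp (hle hx))

lemma φ_mk_C (a : R) : φ p (Ideal.Quotient.mk (TRel R) (C a)) = g p a := by
  simp [φ]

lemma φ_mk_X (a : R) : φ p (Ideal.Quotient.mk (TRel R) (X a)) = (g p a)⁻¹ := by
  simp [φ]

lemma φ_surjective : Function.Surjective (φ p) := by
  intro z
  obtain ⟨x, y, -, rfl⟩ := IsFractionRing.div_surjective (A := R ⧸ p) z
  obtain ⟨r, rfl⟩ := Ideal.Quotient.mk_surjective x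
  obtain ⟨a, rfl⟩ := Ideal.Quotient.mk_surjective y
  refine ⟨Ideal.Quotient.mk (TRel R) (C r * X a), ?_⟩
  simp only [map_mul, φ_mk_C, φ_mk_X, g, RingHom.comp_apply, div_eq_mul_inv]

lemma ker_φ_isMaximal : (RingHom.ker (φ p)).IsMaximal :=
  RingHom.ker_isMaximal_of_surjective _ (φ_surjective p)

lemma comap_ker_φ : (RingHom.ker (φ p)).comap (iotaT R) = p := by
  ext r
  rw [Ideal.mem_comap, RingHom.mem_ker, iotaT, RingHom.comp_apply, φ_mk_C,
    g_eq_zero_iff]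

/-- A little field lemma. -/
lemma inv_of_rel {L : Type*} [Field L] (u v : L) (h1 : u ^ 2 * v = u)
    (h2 : u * v ^ 2 = v) : v = u⁻¹ := by
  by_cases hu : u = 0
  · rw [hu, inv_zero, ← h2, hu, zero_mul]
  · have huv : u * v = 1 := mul_left_cancel₀ hu (by rw [mul_one]; linear_combination h1)
    have hv : v = u⁻¹ * (u * v) := (inv_mul_cancel_left₀ hu v).symm
    rw [hv, huv, mul_one]

set_option maxHeartbeats 1000000 in
set_option synthInstance.maxHeartbeats 400000 in
/-- Any prime over `p` equals `ker (φ p)`. -/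
lemma asIdeal_eq (Q : PrimeSpectrum (TRing R))
    (hp : Q.asIdeal.comap (iotaT R) = p) : Q.asIdeal = RingHom.ker (φ p) := by
  haveI := Q.2
  set D := TRing R ⧸ Q.asIdeal
  set L := FractionRing D
  set h : TRing R →+* L :=
    algebraMap (TRing R) L with hh
  have hker : ∀ t : TRing R, h t = 0 ↔ t ∈ Q.asIdeal := by
    intro t
    rw [hh, IsScalarTower.algebraMap_apply (TRing R) D L]
    exact (map_eq_zero_iff _ (IsFractionRing.injective D L)).trans Ideal.Quotient.eq_zero_iff_mem
  have hcι : ∀ r : R, h (iotaT R r) = 0 ↔ r ∈ p := by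
    intro r
    rw [hker, ← hp, Ideal.mem_comap]
  set ψ : R ⧸ p →+* L :=
    Ideal.Quotient.lift p (h.comp (iotaT R)) (fun r hr => (hcι r).mpr hr) with hψ
  have hψ_mk : ∀ r : R, ψ (Ideal.Quotient.mk p r) = h (iotaT R r) := fun r => rfl
  have hψ_inj : Function.Injective ψ := by
    rw [injective_iff_map_eq_zero]
    intro x hx
    obtain ⟨r, rfl⟩ := Ideal.Quotient.mk_surjective x
    rw [hψ_mk] at hx
    rw [Ideal.Quotient.eq_zero_iff_mem]
    exact (hcι r).mp hx
  set gg : FractionRing (R ⧸ p) →+* L := IsFractionRing.lift hψ_inj with hgg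
  have hC : ∀ a : R, gg (φ p (Ideal.Quotient.mk (TRel R) (C a)))
      = h (Ideal.Quotient.mk (TRel R) (C a)) := by
    intro a
    rw [φ_mk_C]
    show gg (algebraMap (R ⧸ p) _ (Ideal.Quotient.mk p a)) = _
    rw [hgg, IsFractionRing.lift_algebraMap, hψ_mk]
    rfl
  have hcomp : gg.comp (φ p) = h := by
    refine Ideal.Quotient.ringHom_ext ?_
    refine MvPolynomial.ringHom_ext (fun a => ?_) (fun a => ?_)
    · exact hC a
    · show gg (φ p (Ideal.Quotient.mk (TRel R) (X a))) = _
      rw [φ_mk_X, map_inv₀]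
      have hu : gg (φ p (Ideal.Quotient.mk (TRel R) (C a))) =
          h (Ideal.Quotient.mk (TRel R) (C a)) := hC a
      rw [φ_mk_C] at hu
      rw [hu]
      set u := h (Ideal.Quotient.mk (TRel R) (C a))
      set v := h (Ideal.Quotient.mk (TRel R) (X a))
      have rel1 : (Ideal.Quotient.mk (TRel R)) (C a ^ 2 * X a - C a) = 0 :=
        Ideal.Quotient.eq_zero_iff_mem.mpr (Ideal.subset_span ⟨a, Or.inl rfl⟩)
      have rel2 : (Ideal.Quotient.mk (TRel R)) (C a * X a ^ 2 - X a) = 0 :=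
        Ideal.Quotient.eq_zero_iff_mem.mpr (Ideal.subset_span ⟨a, Or.inr rfl⟩)
      have h1 : u ^ 2 * v = u := by
        rw [map_sub, sub_eq_zero] at rel1
        have := congrArg h rel1
        simpa only [map_mul, map_pow] using this
      have h2 : u * v ^ 2 = v := by
        rw [map_sub, sub_eq_zero] at rel2
        have := congrArg h rel2
        simpa only [map_mul, map_pow] using this
      exact (inv_of_rel u v h1 h2).symm
  have hle : RingHom.ker (φ p) ≤ Q.asIdeal := by
    intro t ht
    rw [RingHom.mem_ker] at ht
    rw [← hker, ← hcomp, RingHom.comp_apply, ht, map_zero]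
  exact ((ker_φ_isMaximal p).eq_of_le Q.2.ne_top hle).symm

end TProofAux

theorem comap_iotaT_continuous_bijective (R : Type*) [CommRing R] :
    Continuous (PrimeSpectrum.comap (iotaT R)) ∧
      Function.Bijective (PrimeSpectrum.comap (iotaT R)) := by
  refine ⟨PrimeSpectrum.continuous_comap (iotaT R), ?_, ?_⟩
  · intro Q₁ Q₂ hQ
    haveI := (PrimeSpectrum.comap (iotaT R) Q₁).2
    have h1 := TProofAux.asIdeal_eq ((PrimeSpectrum.comap (iotaT R) Q₁).asIdeal) Q₁ rfl
    have h2 := TProofAux.asIdeal_eq ((PrimeSpectrum.comap (iotaT R) Q₁).asIdeal) Q₂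
      (congrArg PrimeSpectrum.asIdeal hQ.symm)
    exact PrimeSpectrum.ext (h1.trans h2.symm)
  · intro x
    haveI := x.2
    refine ⟨⟨RingHom.ker (TProofAux.φ x.asIdeal), (TProofAux.ker_φ_isMaximal x.asIdeal).isPrime⟩, ?_⟩
    exact PrimeSpectrum.ext (TProofAux.comap_ker_φ x.asIdeal)
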